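/- Let Λ = ℚ[p_1, p_2, …] be the polynomial ring over ℚ in countably many variables p_k indexed by positive integers. Define e_m ∈ Λ by e_0 = 1 and m·e_m = Σ_{i=1}^m (−1)^{i−1} p_i·e_{m−i} for m ≥ 1; let D_1 be the unique ℚ-linear derivation of Λ with D_1(p_k) = k for all k ≥ 1; and for r ∈ ℕ let ε_r : Λ → ℚ be the ℚ-algebra homomorphism with ε_r(p_k) = r. Then for all h, m, r with 1 ≤ h ≤ m and h ≤ r, ε_r(D_1^h(e_m)) = C(r−h, m−h), where C(·,·) is the binomial coefficient. -/

import Mathlib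

open MvPolynomial Finset

/-- The derivation `D_1` of `Λ = ℚ[p_1, p_2, …]` with `D_1(p_k) = k` for all `k ≥ 1`. -/
noncomputable def D1 : Derivation ℚ (MvPolynomial ℕ+ ℚ) (MvPolynomial ℕ+ ℚ) :=
  mkDerivation ℚ fun k : ℕ+ => C (((k : ℕ) : ℚ))

/-- The `ℚ`-algebra homomorphism `ε_r : Λ → ℚ` with `ε_r(p_k) = r` for all `k ≥ 1`. -/
noncomputable def epsHom (r : ℚ) : MvPolynomial ℕ+ ℚ →ₐ[ℚ] ℚ :=
  aeval fun _ : ℕ+ => r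

theorem altSum (s n : ℕ) (hs : 1 ≤ s) :
    ∑ k ∈ range (n + 1), (-1 : ℚ) ^ (n - k) * (s.choose k : ℚ) = ((s - 1).choose n : ℚ) := by
  induction n with
  | zero => simp
  | succ n ih =>
    rw [Finset.sum_range_succ]
    have h1 : ∑ k ∈ range (n + 1), (-1 : ℚ) ^ (n + 1 - k) * (s.choose k : ℚ)
        = -∑ k ∈ range (n + 1), (-1 : ℚ) ^ (n - k) * (s.choose k : ℚ) := by
      rw [← Finset.sum_neg_distrib]
      refine Finset.sum_congr rfl fun k hk => ?_
      rw [Finset.mem_range] at hk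
      have : n + 1 - k = (n - k) + 1 := by omega
      rw [this, pow_succ]; ring
    rw [h1, ih, Nat.sub_self, pow_zero, one_mul]
    obtain ⟨t, rfl⟩ : ∃ t, s = t + 1 := ⟨s - 1, by omega⟩
    rw [Nat.add_sub_cancel, Nat.choose_succ_succ t n]
    push_cast
    ring

theorem lemB (E : ℕ → MvPolynomial ℕ+ ℚ) (E0 : E 0 = 1)
    (Erec : ∀ m : ℕ, 1 ≤ m → (m : ℚ) • E m =
      ∑ i ∈ Finset.range m, C ((-1 : ℚ) ^ i) * (X i.succPNat * E (m - (i + 1))))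
    (r : ℕ) : ∀ m : ℕ, epsHom (r : ℚ) (E m) = (r.choose m : ℚ) := by
  intro m
  induction m using Nat.strong_induction_on with
  | _ m ih =>
  match m with
  | 0 => simp [E0]
  | (n+1) =>
    have hm : 1 ≤ n + 1 := by omega
    have key := congrArg (epsHom (r : ℚ)) (Erec (n+1) hm)
    rw [map_smul, map_sum] at key
    have key2 : ((n+1 : ℕ) : ℚ) * epsHom (r : ℚ) (E (n+1))
        = ∑ i ∈ range (n+1), (-1 : ℚ) ^ i * ((r : ℚ) * (r.choose (n - i) : ℚ)) := by
      rw [smul_eq_mul] at key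
      rw [key]
      refine Finset.sum_congr rfl fun i hi => ?_
      rw [Finset.mem_range] at hi
      rw [map_mul, map_mul]
      have e1 : epsHom (r : ℚ) (C ((-1 : ℚ) ^ i)) = (-1:ℚ)^i := by
        simp [epsHom]
      have e2 : epsHom (r : ℚ) (X i.succPNat) = (r : ℚ) := by simp [epsHom]
      have e3 : n + 1 - (i + 1) = n - i := by omega
      rw [e1, e2, e3, ih (n - i) (by omega)]
    rcases Nat.eq_zero_or_pos r with hr | hr
    · subst hr
      have : epsHom ((0:ℕ) : ℚ) (E (n+1)) = 0 := by
        have hne : ((n+1 : ℕ) : ℚ) ≠ 0 := by positivity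
        have key3 : ((n+1 : ℕ) : ℚ) * epsHom ((0:ℕ) : ℚ) (E (n+1)) = 0 := by
          rw [key2]; simp
        exact (mul_eq_zero.mp key3).resolve_left hne
      rw [this]
      simp [Nat.choose_eq_zero_of_lt (by omega : 0 < n + 1)]
    · -- r ≥ 1
      have hsum : ∑ i ∈ range (n+1), (-1 : ℚ) ^ i * ((r : ℚ) * (r.choose (n - i) : ℚ))
          = (r : ℚ) * ((r-1).choose n : ℚ) := by
        rw [← Finset.sum_range_reflect]
        have : ∀ j ∈ range (n+1), (-1 : ℚ) ^ (n + 1 - 1 - j) * ((r : ℚ) * (r.choose (n - (n + 1 - 1 - j)) : ℚ))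
            = (r : ℚ) * ((-1 : ℚ) ^ (n - j) * (r.choose j : ℚ)) := by
          intro j hj
          rw [Finset.mem_range] at hj
          have e1 : n + 1 - 1 - j = n - j := by omega
          have e2 : n - (n - j) = j := by omega
          rw [e1, e2]; ring
        rw [Finset.sum_congr rfl this, ← Finset.mul_sum, altSum r n hr]
      rw [hsum] at key2
      have hnat : (n + 1) * ((r).choose (n+1)) = r * ((r-1).choose n) := by
        obtain ⟨t, rfl⟩ : ∃ t, r = t + 1 := ⟨r - 1, by omega⟩
        rw [Nat.add_sub_cancel]
        have h5 := Nat.add_one_mul_choose_eq t n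
        rw [Nat.mul_comm (n+1)]
        exact h5.symm
      have hne : ((n+1 : ℕ) : ℚ) ≠ 0 := by positivity
      have : ((n+1 : ℕ) : ℚ) * epsHom (r : ℚ) (E (n+1)) = ((n+1 : ℕ) : ℚ) * ((r.choose (n+1) : ℚ)) := by
        rw [key2]
        have := congrArg (fun x : ℕ => (x : ℚ)) hnat
        push_cast at this ⊢
        linarith [this]
      exact mul_left_cancel₀ hne this

theorem tri {M : Type*} [AddCommMonoid M] (N : ℕ) (f : ℕ → ℕ → M) :
    ∑ i ∈ range N, ∑ j ∈ range (N - i), f i j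
      = ∑ s ∈ range N, ∑ i ∈ range (s + 1), f i (s - i) := by
  rw [Finset.sum_sigma', Finset.sum_sigma']
  refine Finset.sum_nbij' (fun p => ⟨p.1 + p.2, p.1⟩) (fun p => ⟨p.2, p.1 - p.2⟩) ?_ ?_ ?_ ?_ ?_ <;>
    (rintro ⟨a, b⟩ hab; simp only [Finset.mem_sigma, Finset.mem_range] at *) <;>
    first
      | omega
      | (simp only [Sigma.mk.inj_iff]; constructor <;> omega)
      | (congr 1; omega)

theorem lemA (E : ℕ → MvPolynomial ℕ+ ℚ) (E0 : E 0 = 1)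
    (Erec : ∀ m : ℕ, 1 ≤ m → (m : ℚ) • E m =
      ∑ i ∈ Finset.range m, C ((-1 : ℚ) ^ i) * (X i.succPNat * E (m - (i + 1)))) :
    ∀ m : ℕ, D1 (E m) = ∑ j ∈ range m, C ((-1 : ℚ) ^ (m - 1 - j)) * E j := by
  intro m
  induction m using Nat.strong_induction_on with
  | _ m ih =>
  match m with
  | 0 => simp [E0]
  | (n+1) =>
    set m := n + 1 with hmdef
    have hm : 1 ≤ m := by omega
    -- apply D1 to the recurrence
    have key := congrArg (fun p => D1 p) (Erec m hm)
    simp only [Derivation.map_smul, map_sum] at key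
    -- compute D1 of each summand
    have step : ∀ i ∈ range m,
        D1 (C ((-1 : ℚ) ^ i) * (X i.succPNat * E (m - (i + 1))))
          = C ((-1 : ℚ) ^ i) * (C (((i:ℚ) + 1)) * E (m - (i + 1)))
            + C ((-1 : ℚ) ^ i) * (X i.succPNat * D1 (E (m - (i + 1)))) := by
      intro i hi
      have hC : D1 (C ((-1 : ℚ) ^ i)) = 0 := by
        have : (C ((-1 : ℚ) ^ i) : MvPolynomial ℕ+ ℚ) = algebraMap ℚ _ ((-1 : ℚ) ^ i) := rfl
        rw [this, Derivation.map_algebraMap]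
      have hX : D1 (X i.succPNat : MvPolynomial ℕ+ ℚ) = C (((i:ℚ) + 1)) := by
        rw [D1, mkDerivation_X]
        norm_num [Nat.succPNat_coe]
      rw [Derivation.leibniz, hC, Derivation.leibniz, hX]
      simp only [smul_eq_mul, smul_zero, add_zero]
      ring
    rw [Finset.sum_congr rfl step, Finset.sum_add_distrib] at key
    -- U : first sum, reflect the index
    have hU : ∑ i ∈ range m, C ((-1 : ℚ) ^ i) * (C (((i:ℚ) + 1)) * E (m - (i + 1)))
        = ∑ k ∈ range m, C ((-1 : ℚ) ^ (m - 1 - k)) * (C (((m - k : ℕ) : ℚ)) * E k) := by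
      rw [← Finset.sum_range_reflect]
      refine Finset.sum_congr rfl fun k hk => ?_
      rw [Finset.mem_range] at hk
      have e1 : m - (m - 1 - k + 1) = k := by omega
      have e2 : ((m - 1 - k : ℕ) : ℚ) + 1 = ((m - k : ℕ) : ℚ) := by
        have : (m - 1 - k) + 1 = m - k := by omega
        rw [← this]; push_cast; ring
      rw [e1, e2]
    -- T : second sum
    have hT : ∑ i ∈ range m, C ((-1 : ℚ) ^ i) * (X i.succPNat * D1 (E (m - (i + 1))))
        = ∑ t ∈ range m, C ((-1 : ℚ) ^ (m - 1 - t)) * ((t : ℚ) • E t) := by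
      have s1 : ∀ i ∈ range m,
          C ((-1 : ℚ) ^ i) * (X i.succPNat * D1 (E (m - (i + 1))))
            = ∑ j ∈ range (n - i),
                C ((-1 : ℚ) ^ (m - 2 - i - j)) * (C ((-1 : ℚ) ^ i) * (X i.succPNat * E j)) := by
        intro i hi
        rw [Finset.mem_range] at hi
        rw [ih (m - (i + 1)) (by omega)]
        have e3 : m - (i + 1) = n - i := by omega
        rw [e3, Finset.mul_sum, Finset.mul_sum]
        refine Finset.sum_congr rfl fun j hj => ?_
        rw [Finset.mem_range] at hj
        have e4 : n - i - 1 - j = m - 2 - i - j := by omega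
        rw [e4]; ring
      rw [Finset.sum_congr rfl s1]
      -- drop the last (empty) term, i = n
      rw [hmdef, Finset.sum_range_succ, Nat.sub_self, Finset.range_zero, Finset.sum_empty,
        add_zero, ← hmdef]
      -- diagonal reindexing
      rw [tri n (fun i j => C ((-1 : ℚ) ^ (m - 2 - i - j)) * (C ((-1 : ℚ) ^ i) * (X i.succPNat * E j)))]
      -- inner sums are instances of the recurrence
      have s2 : ∀ s ∈ range n,
          ∑ i ∈ range (s + 1),
              C ((-1 : ℚ) ^ (m - 2 - i - (s - i))) * (C ((-1 : ℚ) ^ i) * (X i.succPNat * E (s - i)))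
            = C ((-1 : ℚ) ^ (m - 2 - s)) * (((s + 1 : ℕ) : ℚ) • E (s + 1)) := by
        intro s hs
        rw [Finset.mem_range] at hs
        have s3 : ∀ i ∈ range (s + 1),
            C ((-1 : ℚ) ^ (m - 2 - i - (s - i))) * (C ((-1 : ℚ) ^ i) * (X i.succPNat * E (s - i)))
              = C ((-1 : ℚ) ^ (m - 2 - s)) * (C ((-1 : ℚ) ^ i) * (X i.succPNat * E (s + 1 - (i + 1)))) := by
          intro i hi
          rw [Finset.mem_range] at hi
          have e5 : m - 2 - i - (s - i) = m - 2 - s := by omega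
          have e6 : s - i = s + 1 - (i + 1) := by omega
          rw [e5, e6]
        rw [Finset.sum_congr rfl s3, ← Finset.mul_sum, ← Erec (s + 1) (by omega)]
      rw [Finset.sum_congr rfl s2]
      -- shift the index
      have shift : ∑ t ∈ range m, C ((-1 : ℚ) ^ (m - 1 - t)) * ((t : ℚ) • E t)
          = ∑ s ∈ range n, C ((-1 : ℚ) ^ (m - 1 - (s + 1))) * (((s + 1 : ℕ) : ℚ) • E (s + 1)) := by
        rw [hmdef, Finset.sum_range_succ' (fun t => C ((-1 : ℚ) ^ (m - 1 - t)) * ((t : ℚ) • E t)) n]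
        norm_num
        simp only [hmdef, Nat.add_sub_cancel]
      rw [shift]
      refine Finset.sum_congr rfl fun s hs => ?_
      rw [Finset.mem_range] at hs
      have e7 : m - 2 - s = m - 1 - (s + 1) := by omega
      rw [e7]
    rw [hU, hT, ← Finset.sum_add_distrib] at key
    have final : ∑ k ∈ range m,
        (C ((-1 : ℚ) ^ (m - 1 - k)) * (C (((m - k : ℕ) : ℚ)) * E k)
          + C ((-1 : ℚ) ^ (m - 1 - k)) * ((k : ℚ) • E k))
        = (m : ℚ) • ∑ j ∈ range m, C ((-1 : ℚ) ^ (m - 1 - j)) * E j := by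
      rw [Finset.smul_sum]
      refine Finset.sum_congr rfl fun k hk => ?_
      rw [Finset.mem_range] at hk
      have e8 : (((m - k : ℕ) : ℚ)) + (k : ℚ) = (m : ℚ) := by
        rw [Nat.cast_sub hk.le]; ring
      rw [smul_eq_C_mul, smul_eq_C_mul, ← mul_add, ← add_mul, ← map_add, e8]
      ring
    rw [final] at key
    have hne : ((m : ℕ) : ℚ) ≠ 0 := by positivity
    calc D1 (E m) = (m : ℚ)⁻¹ • ((m : ℚ) • D1 (E m)) := by
          rw [smul_smul, inv_mul_cancel₀ hne, one_smul]
      _ = ∑ j ∈ range m, C ((-1 : ℚ) ^ (m - 1 - j)) * E j := by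
          rw [key, smul_smul, inv_mul_cancel₀ hne, one_smul]


theorem keyStep (E : ℕ → MvPolynomial ℕ+ ℚ) (E0 : E 0 = 1)
    (Erec : ∀ m : ℕ, 1 ≤ m → (m : ℚ) • E m =
      ∑ i ∈ Finset.range m, C ((-1 : ℚ) ^ i) * (X i.succPNat * E (m - (i + 1))))
    (r : ℕ) :
    ∀ h : ℕ, h ≤ r → ∀ m : ℕ, epsHom (r : ℚ) ((D1.toLinearMap ^ h) (E m))
      = if h ≤ m then (((r - h).choose (m - h) : ℕ) : ℚ) else 0 := by
  intro h
  induction h with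
  | zero =>
    intro _ m
    simp only [pow_zero, Module.End.one_apply, Nat.zero_le, if_true, Nat.sub_zero]
    exact lemB E E0 Erec r m
  | succ h ih =>
    intro hhr m
    have ih' := ih (by omega)
    have hpow : (D1.toLinearMap ^ (h + 1)) (E m) = (D1.toLinearMap ^ h) (D1 (E m)) := by
      rw [pow_succ, Module.End.mul_apply]
      rfl
    rw [hpow, lemA E E0 Erec m]
    have expand : epsHom (r : ℚ) ((D1.toLinearMap ^ h)
          (∑ j ∈ Finset.range m, C ((-1 : ℚ) ^ (m - 1 - j)) * E j))
        = ∑ j ∈ Finset.range m, (-1 : ℚ) ^ (m - 1 - j)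
            * epsHom (r : ℚ) ((D1.toLinearMap ^ h) (E j)) := by
      rw [map_sum, map_sum]
      refine Finset.sum_congr rfl fun j hj => ?_
      rw [← smul_eq_C_mul, map_smul, map_smul, smul_eq_mul]
    rw [expand]
    have term : ∀ j ∈ Finset.range m, (-1 : ℚ) ^ (m - 1 - j)
          * epsHom (r : ℚ) ((D1.toLinearMap ^ h) (E j))
        = if h ≤ j then (-1 : ℚ) ^ (m - 1 - j) * (((r - h).choose (j - h) : ℕ) : ℚ) else 0 := by
      intro j hj
      rw [ih' j]
      split
      · rfl
      · rw [mul_zero]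
    rw [Finset.sum_congr rfl term]
    by_cases hcase : h + 1 ≤ m
    · rw [if_pos hcase]
      -- split the range at h
      have hsplit : Finset.range m = Finset.Ico 0 m := by rw [Finset.range_eq_Ico]
      rw [hsplit, ← Finset.sum_Ico_consecutive _ (Nat.zero_le h) (by omega : h ≤ m)]
      have hzero : ∑ j ∈ Finset.Ico 0 h,
          (if h ≤ j then (-1 : ℚ) ^ (m - 1 - j) * (((r - h).choose (j - h) : ℕ) : ℚ) else 0) = 0 := by
        refine Finset.sum_eq_zero fun j hj => ?_
        rw [Finset.mem_Ico] at hj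
        rw [if_neg (by omega)]
      rw [hzero, zero_add, Finset.sum_Ico_eq_sum_range]
      have hform : ∀ k ∈ Finset.range (m - h),
          (if h ≤ h + k then (-1 : ℚ) ^ (m - 1 - (h + k)) * (((r - h).choose (h + k - h) : ℕ) : ℚ) else 0)
            = (-1 : ℚ) ^ (m - h - 1 - k) * (((r - h).choose k : ℕ) : ℚ) := by
        intro k hk
        rw [Finset.mem_range] at hk
        rw [if_pos (by omega)]
        have e1 : m - 1 - (h + k) = m - h - 1 - k := by omega
        have e2 : h + k - h = k := by omega
        rw [e1, e2]
      rw [Finset.sum_congr rfl hform]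
      obtain ⟨n0, hn0⟩ : ∃ n0, m - h = n0 + 1 := ⟨m - h - 1, by omega⟩
      rw [hn0, Nat.add_sub_cancel]
      rw [altSum (r - h) n0 (by omega)]
      have e3 : r - h - 1 = r - (h + 1) := by omega
      have e4 : n0 = m - (h + 1) := by omega
      rw [e3, e4]
    · rw [if_neg hcase]
      refine Finset.sum_eq_zero fun j hj => ?_
      rw [Finset.mem_range] at hj
      rw [if_neg (by omega)]


/-- If `e_0 = 1` and `m·e_m = Σ_{i=1}^m (-1)^{i-1}·p_i·e_{m-i}` for `m ≥ 1`, then for all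
`1 ≤ h ≤ m` with `h ≤ r`, `ε_r(D_1^h(e_m)) = C(r-h, m-h)`. -/
theorem stmt13 (E : ℕ → MvPolynomial ℕ+ ℚ) (E0 : E 0 = 1)
    (Erec : ∀ m : ℕ, 1 ≤ m → (m : ℚ) • E m =
      ∑ i ∈ Finset.range m, C ((-1 : ℚ) ^ i) * (X i.succPNat * E (m - (i + 1))))
    (h m r : ℕ) (hh : 1 ≤ h) (hhm : h ≤ m) (hhr : h ≤ r) :
    epsHom (r : ℚ) ((D1.toLinearMap ^ h) (E m)) = ((r - h).choose (m - h) : ℚ) := by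
  rw [keyStep E E0 Erec r h hhr m, if_pos hhm]
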